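/- Let b, c, T be real numbers with 0 ≤ c < b < T. Then ∫_{b}^{T} (s² − b²)^{−1/2} (s² − c²)^{−1/2} ds ≤ (1/(2b)) · ln( (sqrt(T² − b²) + sqrt(T² − c²))² / (b² − c²) ). -/

import Mathlib

open MeasureTheory Set

/-- Let `b, c, T` be real numbers with `0 ≤ c < b < T`. Then
`∫_{b}^{T} (s² − b²)^{−1/2} (s² − c²)^{−1/2} ds
  ≤ (1/(2b)) ln((√(T² − b²) + √(T² − c²))² / (b² − c²))`. -/
theorem stmt_9 (b c T : ℝ) (hc : 0 ≤ c) (hcb : c < b) (hbT : b < T) :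
    (∫⁻ s in Ioo b T,
        ENNReal.ofReal ((Real.sqrt (s ^ 2 - b ^ 2))⁻¹ * (Real.sqrt (s ^ 2 - c ^ 2))⁻¹)) ≤
      ENNReal.ofReal (1 / (2 * b) *
        Real.log ((Real.sqrt (T ^ 2 - b ^ 2) + Real.sqrt (T ^ 2 - c ^ 2)) ^ 2 /
          (b ^ 2 - c ^ 2))) := by
  have hb : 0 < b := hc.trans_lt hcb
  set u : ℝ → ℝ := fun s => Real.sqrt (s ^ 2 - b ^ 2) with hu_def
  set v : ℝ → ℝ := fun s => Real.sqrt (s ^ 2 - c ^ 2) with hv_def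
  set F : ℝ → ℝ := fun s => (1 / b) * Real.log (u s + v s) with hF_def
  set g : ℝ → ℝ := fun s => s / b * ((u s)⁻¹ * (v s)⁻¹) with hg_def
  -- basic positivity facts
  have hvpos : ∀ s ∈ Icc b T, 0 < v s := by
    intro s hs
    have : c ^ 2 < s ^ 2 := by nlinarith [hs.1]
    exact Real.sqrt_pos.2 (by linarith)
  have hupos : ∀ s ∈ Ioo b T, 0 < u s := by
    intro s hs
    have : b ^ 2 < s ^ 2 := by nlinarith [hs.1, hs.1.le]
    exact Real.sqrt_pos.2 (by linarith)
  have hsum_pos : ∀ s ∈ Icc b T, 0 < u s + v s := by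
    intro s hs
    have := hvpos s hs
    have : 0 ≤ u s := Real.sqrt_nonneg _
    linarith [hvpos s hs]
  -- derivative of F
  have hF_deriv : ∀ s ∈ Ioo b T, HasDerivAt F (g s) s := by
    intro s hs
    have hu0 : 0 < u s := hupos s hs
    have hv0 : 0 < v s := hvpos s ⟨hs.1.le, hs.2.le⟩
    have hdu : HasDerivAt (fun x => x ^ 2 - b ^ 2) (2 * s) s := by
      simpa using (hasDerivAt_pow 2 s).sub_const (b ^ 2)
    have hdv : HasDerivAt (fun x => x ^ 2 - c ^ 2) (2 * s) s := by
      simpa using (hasDerivAt_pow 2 s).sub_const (c ^ 2)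
    have hU : HasDerivAt u (2 * s / (2 * u s)) s := hdu.sqrt (Real.sqrt_pos.1 hu0).ne'
    have hV : HasDerivAt v (2 * s / (2 * v s)) s := hdv.sqrt (Real.sqrt_pos.1 hv0).ne'
    have hsum : HasDerivAt (fun x => u x + v x) (2 * s / (2 * u s) + 2 * s / (2 * v s)) s :=
      hU.add hV
    have hlog := (hsum.log (hsum_pos s ⟨hs.1.le, hs.2.le⟩).ne').const_mul (1 / b)
    refine hlog.congr_deriv ?_
    have huv : u s + v s ≠ 0 := (hsum_pos s ⟨hs.1.le, hs.2.le⟩).ne'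
    simp only [hg_def]
    field_simp
    ring
  -- nonnegativity of g
  have hg_nonneg : ∀ s ∈ Ioo b T, 0 ≤ g s := by
    intro s hs
    have h1 : 0 ≤ s / b := div_nonneg (by linarith [hs.1]) hb.le
    have h2 : 0 ≤ (u s)⁻¹ := by positivity
    have h3 : 0 ≤ (v s)⁻¹ := by positivity
    positivity
  -- continuity of F on Icc b T
  have hF_cont : ContinuousOn F (Icc b T) := by
    apply ContinuousOn.mul continuousOn_const
    apply ContinuousOn.log
    · exact ((continuousOn_pow 2).sub continuousOn_const).sqrt.add
        (((continuousOn_pow 2).sub continuousOn_const).sqrt)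
    · intro s hs; exact (hsum_pos s hs).ne'
  -- g is integrable on Ioo b T
  have hg_int : IntegrableOn g (Ioo b T) := by
    have := intervalIntegral.integrableOn_deriv_of_nonneg hF_cont hF_deriv hg_nonneg
    exact this.mono_set Ioo_subset_Ioc_self
  -- pointwise bound
  have hpt : ∀ s ∈ Ioo b T,
      ENNReal.ofReal ((Real.sqrt (s ^ 2 - b ^ 2))⁻¹ * (Real.sqrt (s ^ 2 - c ^ 2))⁻¹) ≤
      ENNReal.ofReal (g s) := by
    intro s hs
    apply ENNReal.ofReal_le_ofReal
    have h1 : (1 : ℝ) ≤ s / b := (one_le_div hb).2 hs.1.le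
    have h2 : 0 ≤ (u s)⁻¹ * (v s)⁻¹ := by positivity
    calc (u s)⁻¹ * (v s)⁻¹ = 1 * ((u s)⁻¹ * (v s)⁻¹) := by ring
      _ ≤ s / b * ((u s)⁻¹ * (v s)⁻¹) := by gcongr
  -- measurability of g (on the set)
  have hg_meas : Measurable g := by
    apply Measurable.mul
    · exact (measurable_id.div_const b)
    · exact ((measurable_id.pow_const 2).sub measurable_const).sqrt.inv.mul
        (((measurable_id.pow_const 2).sub measurable_const).sqrt.inv)
  calc (∫⁻ s in Ioo b T,
        ENNReal.ofReal ((Real.sqrt (s ^ 2 - b ^ 2))⁻¹ * (Real.sqrt (s ^ 2 - c ^ 2))⁻¹))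
      ≤ ∫⁻ s in Ioo b T, ENNReal.ofReal (g s) := by
        apply setLIntegral_mono (ENNReal.measurable_ofReal.comp hg_meas) hpt
    _ = ENNReal.ofReal (∫ s in Ioo b T, g s) := by
        rw [← ofReal_integral_eq_lintegral_ofReal hg_int]
        exact (ae_restrict_mem measurableSet_Ioo).mono hg_nonneg
    _ ≤ ENNReal.ofReal (1 / (2 * b) *
        Real.log ((Real.sqrt (T ^ 2 - b ^ 2) + Real.sqrt (T ^ 2 - c ^ 2)) ^ 2 /
          (b ^ 2 - c ^ 2))) := by
        apply ENNReal.ofReal_le_ofReal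
        have hIoo : ∫ s in Ioo b T, g s = ∫ s in Ioc b T, g s :=
          (integral_Ioc_eq_integral_Ioo).symm
        have hftc : ∫ s in b..T, g s = F T - F b := by
          apply intervalIntegral.integral_eq_sub_of_hasDeriv_right_of_le hbT.le hF_cont
            (fun x hx => (hF_deriv x hx).hasDerivWithinAt)
          rw [intervalIntegrable_iff_integrableOn_Ioo_of_le hbT.le]
          exact hg_int
        rw [hIoo, ← intervalIntegral.integral_of_le hbT.le, hftc]
        -- now show F T - F b = RHS (in fact equality)
        have hub : u b = 0 := by simp [hu_def]
        have hvb : v b = Real.sqrt (b ^ 2 - c ^ 2) := rfl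
        have hXpos : 0 < u T + v T := hsum_pos T ⟨hbT.le, le_rfl⟩
        have hYpos : 0 < b ^ 2 - c ^ 2 := by nlinarith
        have hlog : Real.log ((u T + v T) ^ 2 / (b ^ 2 - c ^ 2)) =
            2 * Real.log (u T + v T) - Real.log (b ^ 2 - c ^ 2) := by
          rw [Real.log_div (by positivity) hYpos.ne', Real.log_pow]
          push_cast; ring
        have hvb' : Real.log (v b) = Real.log (b ^ 2 - c ^ 2) / 2 := by
          rw [hvb, Real.log_sqrt hYpos.le]
        rw [hF_def]
        simp only [hub, zero_add]
        rw [hlog, hvb']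
        apply le_of_eq
        field_simp
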